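/- As γ_b, γ_e → ∞ with γ_b = c_b P, γ_e = c_e P, P → ∞ (fixed c_b, c_e, g_b, g_e > 0, ρ̄ ∈ [0,1)), the maximum secrecy rate R*(P) = log₂(1 + c_b P g_b (1 + c_e P g_e (1-ρ̄))/(1 + c_e P g_e)) satisfies R*(P) - log₂(c_b P g_b (1-ρ̄)) → 0. -/

import Mathlib

open Filter

theorem stmt_12 (cb ce gb ge ρ : ℝ)
    (hcb : 0 < cb) (hce : 0 < ce) (hgb : 0 < gb) (hge : 0 < ge)
    (hρ0 : 0 ≤ ρ) (hρ1 : ρ < 1) :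
    Tendsto (fun P : ℝ =>
        Real.logb 2 (1 + cb*P*gb*(1 + ce*P*ge*(1-ρ))/(1 + ce*P*ge))
          - Real.logb 2 (cb*P*gb*(1-ρ)))
      atTop (nhds 0) := by
  have h1ρ : 0 < 1 - ρ := by linarith
  set a := cb*ce*gb*ge*(1-ρ) with ha
  have hapos : 0 < a := by positivity
  have hinv : Tendsto (fun P : ℝ => 1/P) atTop (nhds 0) := by
    simpa [one_div] using tendsto_inv_atTop_zero
  -- limit of the rational form
  have hlim : Tendsto (fun P : ℝ =>
      (a + (ce*ge + cb*gb)*(1/P) + (1/P)*(1/P))/(a + (cb*gb*(1-ρ))*(1/P)))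
      atTop (nhds 1) := by
    have hnum : Tendsto (fun P : ℝ => a + (ce*ge + cb*gb)*(1/P) + (1/P)*(1/P))
        atTop (nhds a) := by
      have := (((tendsto_const_nhds (x := a) (f := atTop)).add ((tendsto_const_nhds (x := ce*ge + cb*gb)).mul hinv)).add
        (hinv.mul hinv))
      simpa using this
    have hden : Tendsto (fun P : ℝ => a + (cb*gb*(1-ρ))*(1/P)) atTop (nhds a) := by
      have := (tendsto_const_nhds (x := a) (f := atTop)).add ((tendsto_const_nhds (x := cb*gb*(1-ρ))).mul hinv)
      simpa using this
    have := hnum.div hden (ne_of_gt hapos)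
    rw [div_self (ne_of_gt hapos)] at this
    exact this
  -- logb is continuous at 1
  have hcont : ContinuousAt (Real.logb 2) 1 := Real.continuousAt_logb (by norm_num)
  have hlog : Tendsto (fun P : ℝ =>
      Real.logb 2 ((a + (ce*ge + cb*gb)*(1/P) + (1/P)*(1/P))/(a + (cb*gb*(1-ρ))*(1/P))))
      atTop (nhds 0) := by
    have := hcont.tendsto.comp hlim
    rw [Real.logb_one] at this
    exact this
  refine hlog.congr' ?_
  filter_upwards [eventually_gt_atTop (0:ℝ)] with P hP
  have hE : (0:ℝ) < 1 + ce*P*ge := by positivity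
  have hA : (0:ℝ) < 1 + cb*P*gb*(1 + ce*P*ge*(1-ρ))/(1 + ce*P*ge) := by positivity
  have hB : (0:ℝ) < cb*P*gb*(1-ρ) := by positivity
  have hratio : (a + (ce*ge + cb*gb)*(1/P) + (1/P)*(1/P))/(a + (cb*gb*(1-ρ))*(1/P))
      = (1 + cb*P*gb*(1 + ce*P*ge*(1-ρ))/(1 + ce*P*ge)) / (cb*P*gb*(1-ρ)) := by
    rw [ha]
    field_simp
    ring
  rw [hratio, Real.logb_div (ne_of_gt hA) (ne_of_gt hB)]
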